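/- (Kuratowski separation lemma.) Let X be a metric space, A and B two disjoint closed subsets of X, and K a compact subset of X with K ∩ A ≠ ∅ and K ∩ B ≠ ∅. If K contains no connected component K₀ with K₀ ∩ A ≠ ∅ and K₀ ∩ B ≠ ∅, then there exist two disjoint open sets V₁, V₂ ⊆ X with A ⊆ V₁, B ⊆ V₂, and A ∪ B ∪ K ⊆ V₁ ∪ V₂. -/
import Mathlib

open Set

/-- In a compact Hausdorff space, if the connected component of `x` is disjoint
from a closed set `C`, then there is a clopen set containing `x` disjoint from `C`. -/
lemma exists_isClopen_disjoint_of_connectedComponent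
    {Y : Type*} [TopologicalSpace Y] [T2Space Y] [CompactSpace Y]
    {C : Set Y} (hC : IsClosed C) {x : Y} (h : connectedComponent x ∩ C = ∅) :
    ∃ Z : Set Y, IsClopen Z ∧ x ∈ Z ∧ Z ∩ C = ∅ := by
  by_contra hcon
  push_neg at hcon
  have H := hC.isCompact.inter_iInter_nonempty
    (fun s : {s : Set Y // IsClopen s ∧ x ∈ s} => (s : Set Y))
    (fun s => s.2.1.1) ?_
  · obtain ⟨y, hyC, hy⟩ := H
    rw [← connectedComponent_eq_iInter_isClopen x] at hy
    rw [eq_empty_iff_forall_notMem] at h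
    exact h y ⟨hy, hyC⟩
  · intro u
    have hZ : IsClopen (⋂ s ∈ u, (s : Set Y)) :=
      isClopen_biInter_finset fun s _ => s.2.1
    have hxZ : x ∈ ⋂ s ∈ u, (s : Set Y) := mem_iInter₂.2 fun s _ => s.2.2
    obtain ⟨y, hy1, hy2⟩ := hcon _ hZ hxZ
    exact ⟨y, hy2, hy1⟩

/-- Kuratowski separation lemma: if a compact set `K` in a metric space meets both of
two disjoint closed sets `A`, `B` but contains no connected component meeting both,
then `A`, `B` and `K` can be separated by two disjoint open sets. -/
theorem kuratowski_separation {X : Type*} [MetricSpace X] (A B K : Set X)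
    (hA : IsClosed A) (hB : IsClosed B) (hAB : Disjoint A B)
    (hK : IsCompact K) (hKA : (K ∩ A).Nonempty) (hKB : (K ∩ B).Nonempty)
    (hcomp : ¬ ∃ x ∈ K, (connectedComponentIn K x ∩ A).Nonempty ∧
      (connectedComponentIn K x ∩ B).Nonempty) :
    ∃ V₁ V₂ : Set X, IsOpen V₁ ∧ IsOpen V₂ ∧ Disjoint V₁ V₂ ∧
      A ⊆ V₁ ∧ B ⊆ V₂ ∧ A ∪ B ∪ K ⊆ V₁ ∪ V₂ := by
  classical
  push_neg at hcomp
  haveI : CompactSpace K := isCompact_iff_compactSpace.mp hK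
  set A' : Set K := Subtype.val ⁻¹' A with hA'def
  set B' : Set K := Subtype.val ⁻¹' B with hB'def
  have hA' : IsClosed A' := hA.preimage continuous_subtype_val
  have hB' : IsClosed B' := hB.preimage continuous_subtype_val
  -- for each point, a clopen neighbourhood avoiding `A'` or `B'`
  have key : ∀ x : K, ∃ Z : Set K, IsClopen Z ∧ x ∈ Z ∧ (Z ∩ B' = ∅ ∨ Z ∩ A' = ∅) := by
    intro x
    have hcc : connectedComponentIn K (x : X) = Subtype.val '' connectedComponent x :=
      connectedComponentIn_eq_image x.2
    by_cases hxA : (connectedComponentIn K (x : X) ∩ A).Nonempty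
    · have h := hcomp (x : X) x.2 hxA
      have hBemp : connectedComponent x ∩ B' = ∅ := by
        rw [eq_empty_iff_forall_notMem]
        rintro y ⟨hy1, hy2⟩
        rw [eq_empty_iff_forall_notMem] at h
        exact h (y : X) (by rw [hcc]; exact ⟨mem_image_of_mem _ hy1, hy2⟩)
      obtain ⟨Z, hZ, hxZ, hZB⟩ := exists_isClopen_disjoint_of_connectedComponent hB' hBemp
      exact ⟨Z, hZ, hxZ, Or.inl hZB⟩
    · have hAemp : connectedComponent x ∩ A' = ∅ := by
        rw [eq_empty_iff_forall_notMem]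
        rintro y ⟨hy1, hy2⟩
        exact hxA ⟨y, by rw [hcc]; exact ⟨mem_image_of_mem _ hy1, hy2⟩⟩
      obtain ⟨Z, hZ, hxZ, hZA⟩ := exists_isClopen_disjoint_of_connectedComponent hA' hAemp
      exact ⟨Z, hZ, hxZ, Or.inr hZA⟩
  choose Z hZclopen hZmem hZalt using key
  -- finite subcover
  obtain ⟨t, ht⟩ := isCompact_univ.elim_finite_subcover Z (fun x => (hZclopen x).2)
    (fun x _ => mem_iUnion.2 ⟨x, hZmem x⟩)
  -- the clopen piece containing `A'`
  set C : Set K := ⋃ x ∈ t.filter (fun x => Z x ∩ B' = ∅), Z x with hCdef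
  have hCclopen : IsClopen C := by
    apply Set.Finite.isClopen_biUnion (Finset.finite_toSet _)
    exact fun x _ => hZclopen x
  have hCB : C ∩ B' = ∅ := by
    rw [eq_empty_iff_forall_notMem]
    rintro y ⟨hy1, hy2⟩
    obtain ⟨x, hx, hyx⟩ := mem_iUnion₂.1 hy1
    have hfil := (Finset.mem_filter.1 hx).2
    rw [eq_empty_iff_forall_notMem] at hfil
    exact hfil y ⟨hyx, hy2⟩
  have hAC : A' ⊆ C := by
    intro a haA
    obtain ⟨x, hx, hax⟩ := mem_iUnion₂.1 (ht (mem_univ a))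
    have hne : Z x ∩ A' ≠ ∅ := by
      rw [← nonempty_iff_ne_empty]; exact ⟨a, hax, haA⟩
    have hB0 : Z x ∩ B' = ∅ := (hZalt x).resolve_right hne
    exact mem_iUnion₂.2 ⟨x, Finset.mem_filter.2 ⟨hx, hB0⟩, hax⟩
  -- push back to `X`
  set K₁ : Set X := Subtype.val '' C with hK₁def
  set K₂ : Set X := Subtype.val '' Cᶜ with hK₂def
  have hK₁comp : IsCompact K₁ :=
    (hCclopen.1.isCompact).image continuous_subtype_val
  have hK₂comp : IsCompact K₂ :=
    ((hCclopen.compl.1).isCompact).image continuous_subtype_val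
  have hKunion : K = K₁ ∪ K₂ := by
    ext y
    constructor
    · intro hy
      by_cases h : (⟨y, hy⟩ : K) ∈ C
      · exact Or.inl ⟨⟨y, hy⟩, h, rfl⟩
      · exact Or.inr ⟨⟨y, hy⟩, h, rfl⟩
    · rintro (⟨z, _, rfl⟩ | ⟨z, _, rfl⟩) <;> exact z.2
  have hK₁B : Disjoint K₁ B := by
    rw [disjoint_iff_inter_eq_empty, eq_empty_iff_forall_notMem]
    rintro y ⟨⟨z, hzC, rfl⟩, hyB⟩
    rw [eq_empty_iff_forall_notMem] at hCB
    exact hCB z ⟨hzC, hyB⟩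
  have hK₂A : Disjoint K₂ A := by
    rw [disjoint_iff_inter_eq_empty, eq_empty_iff_forall_notMem]
    rintro y ⟨⟨z, hzC, rfl⟩, hyA⟩
    exact hzC (hAC hyA)
  have hK₁K₂ : Disjoint K₁ K₂ := by
    rw [disjoint_iff_inter_eq_empty, eq_empty_iff_forall_notMem]
    rintro y ⟨⟨z, hzC, rfl⟩, ⟨w, hwC, hwz⟩⟩
    rw [show w = z from Subtype.val_injective hwz] at hwC
    exact hwC hzC
  -- separate the disjoint closed sets `A ∪ K₁` and `B ∪ K₂`
  have hS : IsClosed (A ∪ K₁) := hA.union hK₁comp.isClosed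
  have hT : IsClosed (B ∪ K₂) := hB.union hK₂comp.isClosed
  have hST : Disjoint (A ∪ K₁) (B ∪ K₂) := by
    rw [disjoint_union_left, disjoint_union_right, disjoint_union_right]
    exact ⟨⟨hAB, hK₂A.symm⟩, ⟨hK₁B, hK₁K₂⟩⟩
  obtain ⟨U, V, hU, hV, hSU, hTV, hUV⟩ := normal_separation hS hT hST
  refine ⟨U, V, hU, hV, hUV, fun a ha => hSU (Or.inl ha), fun b hb => hTV (Or.inl hb), ?_⟩
  rintro y (hy | hy)
  · rcases hy with hy | hy
    · exact Or.inl (hSU (Or.inl hy))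
    · exact Or.inr (hTV (Or.inl hy))
  · rw [hKunion] at hy
    rcases hy with hy | hy
    · exact Or.inl (hSU (Or.inr hy))
    · exact Or.inr (hTV (Or.inr hy))
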